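/- An open graph (G, I, O) has a gflow if and only if it has a focused gflow. -/

import Mathlib

open scoped Classical
noncomputable section

variable {V : Type*} [Fintype V] [DecidableEq V]

/-- Odd neighborhood: vertices with an odd number of neighbors in `S`. -/
def oddNbhd (G : SimpleGraph V) (S : Finset V) : Finset V :=
  Finset.univ.filter fun v => Odd (S.filter (G.Adj v)).card

/-- `(g, r)` is a gflow of the open graph `(G, I, O)`. -/
def IsGflow (G : SimpleGraph V) (I O : Finset V)
    (g : V → Finset V) (r : V → V → Prop) : Prop :=
  IsStrictOrder V r ∧
  ∀ u ∉ O,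
    g u ⊆ Iᶜ ∧
    (∀ v ∈ g u, r u v) ∧
    u ∈ oddNbhd G (g u) ∧
    (∀ v ∈ oddNbhd G (g u), v ≠ u → r u v)

def HasGflow (G : SimpleGraph V) (I O : Finset V) : Prop :=
  ∃ g r, IsGflow G I O g r

/-- `g` is a focused gflow of the open graph `(G, I, O)`. -/
def IsFocusedGflow (G : SimpleGraph V) (I O : Finset V) (g : V → Finset V) : Prop :=
  (∀ u, ¬ Relation.TransGen (fun a b => a ∉ O ∧ b ∈ g a) u u) ∧
  ∀ u ∉ O, g u ⊆ Iᶜ ∧ oddNbhd G (g u) ∩ Oᶜ = {u}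

/-! ### Auxiliary material -/

lemma zmod2_cases (x : ZMod 2) : x = 0 ∨ x = 1 := by revert x; decide

lemma odd_iff_cast (n : ℕ) : Odd n ↔ (n : ZMod 2) = 1 := by
  rw [Nat.odd_iff, ← ZMod.natCast_mod n 2]
  rcases Nat.mod_two_eq_zero_or_one n with h | h <;> rw [h] <;> simp

/-- Characteristic function of a finset with values in `ZMod 2`. -/
def chiF (S : Finset V) : V → ZMod 2 := fun v => if v ∈ S then 1 else 0

/-- Odd-neighbourhood as a linear map on `ZMod 2`-valued functions. -/
def oddL (G : SimpleGraph V) : (V → ZMod 2) →ₗ[ZMod 2] (V → ZMod 2) where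
  toFun f v := ∑ w, if G.Adj v w then f w else 0
  map_add' f g := by
    funext v
    rw [Pi.add_apply, ← Finset.sum_add_distrib]
    refine Finset.sum_congr rfl fun w _ => ?_
    by_cases h : G.Adj v w <;> simp [h]
  map_smul' c f := by
    funext v
    simp only [Pi.smul_apply, smul_eq_mul, RingHom.id_apply, Finset.mul_sum]
    refine Finset.sum_congr rfl fun w _ => ?_
    by_cases h : G.Adj v w <;> simp [h]

lemma mem_oddNbhd_iff (G : SimpleGraph V) (S : Finset V) (v : V) :
    v ∈ oddNbhd G S ↔ oddL G (chiF S) v = 1 := by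
  simp only [oddNbhd, Finset.mem_filter, Finset.mem_univ, true_and]
  rw [odd_iff_cast]
  have : oddL G (chiF S) v = ((S.filter (G.Adj v)).card : ZMod 2) := by
    have h1 : oddL G (chiF S) v
        = ∑ w : V, if w ∈ S.filter (G.Adj v) then (1 : ZMod 2) else 0 := by
      refine Finset.sum_congr rfl fun w _ => ?_
      by_cases h : G.Adj v w <;> by_cases h2 : w ∈ S <;>
        simp [chiF, h, h2]
    rw [h1, Finset.sum_ite_mem, Finset.univ_inter, Finset.sum_const, nsmul_eq_mul, mul_one]
  rw [this]

/-- The focusing recursion. -/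
def focusAux (G : SimpleGraph V) (O : Finset V) (g : V → Finset V) (r : V → V → Prop)
    (wf : WellFounded (fun a b => r b a))
    (hr : ∀ u, u ∉ O → ∀ v ∈ ((oddNbhd G (g u)) ∩ Oᶜ).erase u, r u v) :
    V → (V → ZMod 2) :=
  wf.fix fun u ih =>
    if hu : u ∈ O then 0
    else chiF (g u) + ∑ v ∈ (((oddNbhd G (g u)) ∩ Oᶜ).erase u).attach,
      ih v.1 (hr u hu v.1 v.2)

lemma focusAux_eq (G : SimpleGraph V) (O : Finset V) (g : V → Finset V) (r : V → V → Prop)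
    (wf : WellFounded (fun a b => r b a))
    (hr : ∀ u, u ∉ O → ∀ v ∈ ((oddNbhd G (g u)) ∩ Oᶜ).erase u, r u v) (u : V) :
    focusAux G O g r wf hr u =
      if hu : u ∈ O then 0
      else chiF (g u) + ∑ v ∈ (((oddNbhd G (g u)) ∩ Oᶜ).erase u).attach,
        focusAux G O g r wf hr v.1 := by
  unfold focusAux
  rw [WellFounded.fix_eq]

theorem hasGflow_iff_hasFocusedGflow (G : SimpleGraph V) (I O : Finset V) :
    HasGflow G I O ↔ ∃ g, IsFocusedGflow G I O g := by
  constructor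
  · rintro ⟨g, r, hso, hg⟩
    haveI hT : IsTrans V r := hso.toIsTrans
    haveI hI : IsIrrefl V r := hso.toIrrefl
    haveI : IsTrans V (fun a b => r b a) := ⟨fun a b c h1 h2 => hT.trans c b a h2 h1⟩
    haveI : IsIrrefl V (fun a b => r b a) := ⟨fun a => hI.irrefl a⟩
    have wf : WellFounded (fun a b : V => r b a) :=
      Finite.wellFounded_of_trans_of_irrefl _
    have hr : ∀ u, u ∉ O → ∀ v ∈ ((oddNbhd G (g u)) ∩ Oᶜ).erase u, r u v := by
      intro u hu v hv
      exact (hg u hu).2.2.2 v (Finset.mem_inter.mp (Finset.mem_of_mem_erase hv)).1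
        (Finset.ne_of_mem_erase hv)
    set f := focusAux G O g r wf hr with hf
    -- main induction
    have main : ∀ u : V, u ∉ O →
        (∀ b, f u b ≠ 0 → b ∈ Iᶜ ∧ r u b) ∧
        (∀ v, v ∉ O → oddL G (f u) v = if v = u then 1 else 0) := by
      intro u
      induction u using wf.induction with
      | _ u ih =>
        intro hu
        have heq := focusAux_eq G O g r wf hr u
        rw [← hf] at heq
        rw [dif_neg hu] at heq
        set bad := ((oddNbhd G (g u)) ∩ Oᶜ).erase u with hbad
        constructor
        · intro b hb
          rw [heq] at hb
          by_cases h1 : chiF (g u) b ≠ 0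
          · have hbgu : b ∈ g u := by
              by_contra h
              exact h1 (by simp [chiF, h])
            exact ⟨(hg u hu).1 hbgu, (hg u hu).2.1 b hbgu⟩
          · push_neg at h1
            have hsum : (∑ v ∈ bad.attach, f v.1 b) ≠ 0 := by
              intro h
              apply hb
              simp only [Pi.add_apply, Finset.sum_apply]
              rw [h1, h, zero_add]
            obtain ⟨v, _, hv⟩ := Finset.exists_ne_zero_of_sum_ne_zero hsum
            have hvO : v.1 ∉ O := by
              have := (Finset.mem_inter.mp (Finset.mem_of_mem_erase v.2)).2
              simpa using this
            have := (ih v.1 (hr u hu v.1 v.2) hvO).1 b hv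
            exact ⟨this.1, hT.trans _ _ _ (hr u hu v.1 v.2) this.2⟩
        · intro v hv
          rw [heq, map_add, map_sum]
          simp only [Pi.add_apply, Finset.sum_apply]
          have h1 : ∀ w ∈ bad.attach, oddL G (f w.1) v = if v = w.1 then 1 else 0 := by
            intro w _
            have hwO : w.1 ∉ O := by
              have := (Finset.mem_inter.mp (Finset.mem_of_mem_erase w.2)).2
              simpa using this
            exact (ih w.1 (hr u hu w.1 w.2) hwO).2 v hv
          rw [Finset.sum_congr rfl h1]
          have h2 : (∑ w ∈ bad.attach, if v = w.1 then (1 : ZMod 2) else 0)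
              = if v ∈ bad then 1 else 0 := by
            rw [Finset.sum_attach bad (fun w => if v = w then (1 : ZMod 2) else 0)]
            exact Finset.sum_ite_eq bad v (fun _ => (1 : ZMod 2))
          rw [h2]
          by_cases hvu : v = u
          · subst hvu
            have : v ∉ bad := fun h => (Finset.ne_of_mem_erase h) rfl
            rw [if_neg this, if_pos rfl, add_zero]
            exact (mem_oddNbhd_iff G (g v) v).mp (hg v hu).2.2.1
          · rw [if_neg hvu]
            have hmem : v ∈ bad ↔ v ∈ oddNbhd G (g u) := by
              constructor
              · intro h
                exact (Finset.mem_inter.mp (Finset.mem_of_mem_erase h)).1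
              · intro h
                exact Finset.mem_erase.mpr ⟨hvu, Finset.mem_inter.mpr ⟨h, by simpa using hv⟩⟩
            by_cases h3 : v ∈ oddNbhd G (g u)
            · rw [if_pos (hmem.mpr h3), (mem_oddNbhd_iff G (g u) v).mp h3]
              decide
            · rw [if_neg (fun h => h3 (hmem.mp h)), add_zero]
              rcases zmod2_cases (oddL G (chiF (g u)) v) with h | h
              · exact h
              · exact absurd ((mem_oddNbhd_iff G (g u) v).mpr h) h3
    -- build the focused gflow
    refine ⟨fun u => Finset.univ.filter (fun b => f u b = 1), ?_, ?_⟩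
    · intro u hcyc
      have step : ∀ a b, (a ∉ O ∧ b ∈ Finset.univ.filter (fun b => f a b = 1)) → r a b := by
        rintro a b ⟨ha, hb⟩
        have : f a b = 1 := (Finset.mem_filter.mp hb).2
        exact ((main a ha).1 b (by rw [this]; exact one_ne_zero)).2
      have ht : ∀ a b, Relation.TransGen
          (fun x y => x ∉ O ∧ y ∈ Finset.univ.filter (fun b => f x b = 1)) a b → r a b := by
        intro a b h
        induction h with
        | single h => exact step _ _ h
        | tail _ h ihh => exact hT.trans _ _ _ ihh (step _ _ h)
      exact hI.irrefl u (ht u u hcyc)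
    · intro u hu
      have hchi : chiF (Finset.univ.filter (fun b => f u b = 1)) = f u := by
        funext b
        simp only [chiF, Finset.mem_filter, Finset.mem_univ, true_and]
        rcases zmod2_cases (f u b) with h | h <;> simp [h]
      constructor
      · intro b hb
        exact ((main u hu).1 b (by
          rw [(Finset.mem_filter.mp hb).2]; exact one_ne_zero)).1
      · ext v
        simp only [Finset.mem_inter, Finset.mem_compl, Finset.mem_singleton]
        rw [mem_oddNbhd_iff, hchi]
        constructor
        · rintro ⟨h1, h2⟩
          have := (main u hu).2 v h2
          rw [this] at h1
          by_contra hne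
          rw [if_neg hne] at h1
          exact zero_ne_one h1
        · rintro rfl
          refine ⟨?_, hu⟩
          rw [(main v hu).2 v hu, if_pos rfl]
  · rintro ⟨g, hacyc, hfoc⟩
    set T := Relation.TransGen (fun a b => a ∉ O ∧ b ∈ g a) with hT
    have hTnO : ∀ a b, T a b → a ∉ O := by
      intro a b h
      induction h with
      | single h => exact h.1
      | tail _ _ ih => exact ih
    refine ⟨g, fun a b => T a b ∨ (a ∉ O ∧ b ∈ O), ?_, ?_⟩
    · have h1 : IsIrrefl V (fun a b => T a b ∨ (a ∉ O ∧ b ∈ O)) := by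
        constructor
        intro a h
        rcases h with h | ⟨h1, h2⟩
        · exact hacyc a h
        · exact h1 h2
      have h2 : IsTrans V (fun a b => T a b ∨ (a ∉ O ∧ b ∈ O)) := by
        constructor
        rintro a b c (h1 | ⟨h1, h2⟩) (h3 | ⟨h3, h4⟩)
        · exact Or.inl (h1.trans h3)
        · exact Or.inr ⟨hTnO a b h1, h4⟩
        · exact absurd h2 (hTnO b c h3)
        · exact absurd h2 h3
      exact { toIrrefl := h1, toIsTrans := h2 }
    · intro u hu
      obtain ⟨hsub, hodd⟩ := hfoc u hu
      refine ⟨hsub, fun v hv => Or.inl (Relation.TransGen.single ⟨hu, hv⟩), ?_, ?_⟩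
      · have : u ∈ oddNbhd G (g u) ∩ Oᶜ := by rw [hodd]; exact Finset.mem_singleton_self u
        exact (Finset.mem_inter.mp this).1
      · intro v hvmem hvne
        by_cases hvO : v ∈ O
        · exact Or.inr ⟨hu, hvO⟩
        · exfalso
          apply hvne
          have : v ∈ oddNbhd G (g u) ∩ Oᶜ :=
            Finset.mem_inter.mpr ⟨hvmem, Finset.mem_compl.mpr hvO⟩
          rw [hodd] at this
          exact Finset.mem_singleton.mp this
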